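/- arXiv:2508.06897 — 3 statements merged into one kernel-verified Lean document; each statement's English description precedes it below -/
import Mathlib

section
/- Let X and Y be nonempty sets of real numbers such that every element of X is strictly less than every element of Y, X has no greatest element, Y has no least element, and suppose there exists n ∈ ℕ with y - x > 1/(n+1) for all x ∈ X, y ∈ Y. Then the set of real numbers a satisfying x < a < y for all x ∈ X, y ∈ Y is infinite. -/
theorem bolzano_110_case1 (X Y : Set ℝ)
    (hX : X.Nonempty) (hY : Y.Nonempty)
    (hlt : ∀ x ∈ X, ∀ y ∈ Y, x < y)
    (hnomax : ∀ x ∈ X, ∃ x' ∈ X, x < x')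
    (hnomin : ∀ y ∈ Y, ∃ y' ∈ Y, y' < y)
    (hgap : ∃ n : ℕ, ∀ x ∈ X, ∀ y ∈ Y, y - x > 1 / (n + 1)) :
    {a : ℝ | ∀ x ∈ X, ∀ y ∈ Y, x < a ∧ a < y}.Infinite := by
  obtain ⟨n, hn⟩ := hgap
  obtain ⟨y0, hy0⟩ := hY
  set ε : ℝ := 1 / (n + 1) with hε
  have hεpos : 0 < ε := by positivity
  have hbdd : BddAbove X := ⟨y0, fun x hx => (hlt x hx y0 hy0).le⟩
  set s := sSup X with hs
  have hle : ∀ x ∈ X, x ≤ s := fun x hx => le_csSup hbdd hx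
  have hyge : ∀ y ∈ Y, s + ε ≤ y := by
    intro y hy
    have : s ≤ y - ε := csSup_le hX fun x hx => by linarith [hn x hx y hy]
    linarith
  apply (Set.Ioo_infinite (show s < s + ε by linarith)).mono
  intro a ha x hx y hy
  exact ⟨lt_of_le_of_lt (hle x hx) ha.1, lt_of_lt_of_le ha.2 (hyge y hy)⟩
end

section
/- Let X and Y be nonempty sets of real numbers such that every element of X is strictly less than every element of Y, X has no greatest element, Y has no least element, and suppose for every n ∈ ℕ there exist x ∈ X and y ∈ Y with y - x < 1/(n+1). Then there exists exactly one real number a with x < a < y for all x ∈ X, y ∈ Y. -/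
theorem bolzano_110_case2 (X Y : Set ℝ)
    (hX : X.Nonempty) (hY : Y.Nonempty)
    (hlt : ∀ x ∈ X, ∀ y ∈ Y, x < y)
    (hnomax : ∀ x ∈ X, ∃ x' ∈ X, x < x')
    (hnomin : ∀ y ∈ Y, ∃ y' ∈ Y, y' < y)
    (hsmall : ∀ n : ℕ, ∃ x ∈ X, ∃ y ∈ Y, y - x < 1 / (n + 1)) :
    ∃! a : ℝ, ∀ x ∈ X, ∀ y ∈ Y, x < a ∧ a < y := by
  obtain ⟨y0, hy0⟩ := hY
  have hbdd : BddAbove X := ⟨y0, fun x hx => (hlt x hx y0 hy0).le⟩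
  set a := sSup X with ha
  have hmain : ∀ x ∈ X, ∀ y ∈ Y, x < a ∧ a < y := by
    intro x hx y hy
    constructor
    · obtain ⟨x', hx', hxx'⟩ := hnomax x hx
      exact lt_of_lt_of_le hxx' (le_csSup hbdd hx')
    · obtain ⟨y', hy', hyy'⟩ := hnomin y hy
      have : a ≤ y' := csSup_le hX fun z hz => (hlt z hz y' hy').le
      exact lt_of_le_of_lt this hyy'
  refine ⟨a, hmain, fun b hb => ?_⟩
  by_contra hne
  have hpos : 0 < |b - a| := abs_pos.mpr (sub_ne_zero.mpr hne)
  obtain ⟨n, hn⟩ := exists_nat_one_div_lt hpos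
  obtain ⟨x, hx, y, hy, hxy⟩ := hsmall n
  obtain ⟨h1, h2⟩ := hmain x hx y hy
  obtain ⟨h3, h4⟩ := hb x hx y hy
  have : |b - a| < 1 / (n + 1) := by
    rw [abs_sub_lt_iff]; constructor <;> linarith
  linarith
end

section
/- Let B be a property of real numbers. Suppose there exists a real number U such that every X < U satisfies B, and there exists some X > U not satisfying B. Then there exists a real number A such that every X < A satisfies B, and for every Y, if every X < Y satisfies B then Y ≤ A. -/
theorem bolzano_supremum_theorem (B : ℝ → Prop) (U : ℝ)
    (hU : ∀ X : ℝ, X < U → B X)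
    (hnot : ∃ X : ℝ, X > U ∧ ¬ B X) :
    ∃ A : ℝ, (∀ X : ℝ, X < A → B X) ∧ ∀ Y : ℝ, (∀ X : ℝ, X < Y → B X) → Y ≤ A := by
  obtain ⟨X₀, hX₀U, hX₀⟩ := hnot
  set S : Set ℝ := {Y | ∀ X : ℝ, X < Y → B X} with hS
  have hne : S.Nonempty := ⟨U, hU⟩
  have hbdd : BddAbove S := ⟨X₀, fun Y hY => by
    by_contra h
    exact hX₀ (hY X₀ (lt_of_not_ge h))⟩
  refine ⟨sSup S, fun X hX => ?_, fun Y hY => le_csSup hbdd hY⟩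
  obtain ⟨Z, hZ, hXZ⟩ := exists_lt_of_lt_csSup hne hX
  exact hZ X hXZ
end
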